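/- The classical Boole transformation B : ℝ\{0} → ℝ, B(x) = x − 1/x, preserves Lebesgue measure on ℝ: for every Borel set A ⊆ ℝ, Leb(B^{-1} A) = Leb(A). -/

import Mathlib

open MeasureTheory Set

private noncomputable def sq4 (u : ℝ) : ℝ := Real.sqrt (u ^ 2 + 4)

private lemma sq4_pos (u : ℝ) : 0 < sq4 u := Real.sqrt_pos.2 (by positivity)

private lemma sq4_sq (u : ℝ) : sq4 u ^ 2 = u ^ 2 + 4 :=
  Real.sq_sqrt (by positivity)

private lemma abs_lt_sq4 (u : ℝ) : |u| < sq4 u := by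
  have h := sq4_pos u
  nlinarith [sq4_sq u, abs_nonneg u, sq_abs u]

private noncomputable def fp (u : ℝ) : ℝ := (u + sq4 u) / 2
private noncomputable def fm (u : ℝ) : ℝ := (u - sq4 u) / 2
private noncomputable def dp (u : ℝ) : ℝ := (1 + u / sq4 u) / 2
private noncomputable def dm (u : ℝ) : ℝ := (1 - u / sq4 u) / 2

private lemma fp_pos (u : ℝ) : 0 < fp u := by
  have := abs_lt_sq4 u; have := neg_abs_le u
  unfold fp; linarith

private lemma fm_neg (u : ℝ) : fm u < 0 := by
  have := abs_lt_sq4 u; have := le_abs_self u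
  unfold fm; linarith

private lemma dp_pos (u : ℝ) : 0 < dp u := by
  have h := sq4_pos u
  have h2 := abs_lt_sq4 u; have := neg_abs_le u
  have : 0 < 1 + u / sq4 u := by
    rw [← div_self h.ne', ← add_div]
    exact div_pos (by linarith) h
  unfold dp; linarith

private lemma dm_pos (u : ℝ) : 0 < dm u := by
  have h := sq4_pos u
  have h2 := abs_lt_sq4 u; have := le_abs_self u
  have : 0 < 1 - u / sq4 u := by
    rw [← div_self h.ne', ← sub_div]
    exact div_pos (by linarith) h
  unfold dm; linarith

private lemma dp_add_dm (u : ℝ) : dp u + dm u = 1 := by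
  unfold dp dm; ring

private lemma hasDerivAt_sq4 (u : ℝ) : HasDerivAt sq4 (u / sq4 u) u := by
  have h : HasDerivAt (fun u : ℝ => u ^ 2 + 4) (2 * u) u := by
    simpa using ((hasDerivAt_pow 2 u).add_const 4)
  have := h.sqrt (by positivity)
  convert this using 1
  · funext y; rfl
  · unfold sq4; rw [mul_div_mul_left _ _ two_ne_zero]

private lemma hasDerivAt_fp (u : ℝ) : HasDerivAt fp (dp u) u := by
  have := ((hasDerivAt_id u).add (hasDerivAt_sq4 u)).div_const 2
  exact this

private lemma hasDerivAt_fm (u : ℝ) : HasDerivAt fm (dm u) u := by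
  have := ((hasDerivAt_id u).sub (hasDerivAt_sq4 u)).div_const 2
  exact this

private lemma fp_mul_fm (u : ℝ) : fp u * fm u = -1 := by
  unfold fp fm
  nlinarith [sq4_sq u]

private lemma B_fp (u : ℝ) : fp u - 1 / fp u = u := by
  have h : 1 / fp u = -fm u := by
    rw [div_eq_iff (fp_pos u).ne']
    linarith [fp_mul_fm u]
  rw [h]
  unfold fp fm; ring

private lemma B_fm (u : ℝ) : fm u - 1 / fm u = u := by
  have h : 1 / fm u = -fp u := by
    rw [div_eq_iff (fm_neg u).ne]
    linarith [fp_mul_fm u]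
  rw [h]
  unfold fp fm; ring

private lemma fp_of_pos {x : ℝ} (hx : 0 < x) : fp (x - 1 / x) = x := by
  have hx' : x ≠ 0 := hx.ne'
  have h1 : 0 < x + 1 / x := by positivity
  have hs : sq4 (x - 1 / x) = x + 1 / x := by
    rw [sq4, show (x - 1/x) ^ 2 + 4 = (x + 1/x) ^ 2 by field_simp; ring,
      Real.sqrt_sq h1.le]
  unfold fp; rw [hs]; ring

private lemma fm_of_neg {x : ℝ} (hx : x < 0) : fm (x - 1 / x) = x := by
  have hx' : x ≠ 0 := hx.ne
  have h1 : x + 1 / x < 0 := by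
    have : 1 / x < 0 := one_div_neg.2 hx
    linarith
  have hs : sq4 (x - 1 / x) = -(x + 1 / x) := by
    rw [sq4, show (x - 1/x) ^ 2 + 4 = (-(x + 1/x)) ^ 2 by field_simp; ring,
      Real.sqrt_sq (by linarith)]
  unfold fm; rw [hs]; ring

private theorem lintegral_image_deriv {s : Set ℝ} {f f' : ℝ → ℝ}
    (hs : MeasurableSet s) (hf' : ∀ x ∈ s, HasDerivWithinAt f (f' x) s x)
    (hf : InjOn f s) (g : ℝ → ENNReal) :
    ∫⁻ x in f '' s, g x = ∫⁻ x in s, ENNReal.ofReal |f' x| * g (f x) := by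
  simpa only [ContinuousLinearMap.det_toSpanSingleton] using
    lintegral_image_eq_lintegral_abs_det_fderiv_mul volume hs
      (fun x hx => (hf' x hx).hasFDerivWithinAt) hf g

theorem boole_preserves_lebesgue
    (B : ℝ → ℝ) (hB : ∀ x : ℝ, B x = x - 1 / x)
    (A : Set ℝ) (hA : MeasurableSet A) :
    volume (B ⁻¹' A) = volume A := by
  have hBmeas : Measurable B := by
    have : B = fun x => x - 1 / x := funext hB
    rw [this]; exact measurable_id.sub (measurable_const.div measurable_id)
  have hpre : MeasurableSet (B ⁻¹' A) := hBmeas hA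
  -- images
  have himp : fp '' A = B ⁻¹' A ∩ Ioi 0 := by
    ext x
    constructor
    · rintro ⟨u, hu, rfl⟩
      exact ⟨by rw [Set.mem_preimage, hB, B_fp]; exact hu, fp_pos u⟩
    · rintro ⟨hx, hx0⟩
      exact ⟨B x, hx, by rw [hB]; exact fp_of_pos hx0⟩
  have himm : fm '' A = B ⁻¹' A ∩ Iio 0 := by
    ext x
    constructor
    · rintro ⟨u, hu, rfl⟩
      exact ⟨by rw [Set.mem_preimage, hB, B_fm]; exact hu, fm_neg u⟩
    · rintro ⟨hx, hx0⟩
      exact ⟨B x, hx, by rw [hB]; exact fm_of_neg hx0⟩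
  -- injectivity
  have hinjp : InjOn fp A := fun a _ b _ h => by
    have := B_fp a; rw [h, B_fp b] at this; exact this.symm
  have hinjm : InjOn fm A := fun a _ b _ h => by
    have := B_fm a; rw [h, B_fm b] at this; exact this.symm
  -- split the preimage
  have hsplit : volume (B ⁻¹' A) = volume (fm '' A) + volume (fp '' A) := by
    rw [himp, himm]
    have hsub : B ⁻¹' A ⊆ (B ⁻¹' A ∩ Iio 0) ∪ (B ⁻¹' A ∩ Ioi 0) ∪ {0} := by
      intro x hx
      rcases lt_trichotomy x 0 with h | h | h
      · exact Or.inl (Or.inl ⟨hx, h⟩)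
      · exact Or.inr (by simp [h])
      · exact Or.inl (Or.inr ⟨hx, h⟩)
    have hdisj : Disjoint (B ⁻¹' A ∩ Iio 0) (B ⁻¹' A ∩ Ioi 0) :=
      (Set.disjoint_left.2 fun x hx hx' => absurd (show x < 0 from hx.2) (not_lt.2 (show (0:ℝ) < x from hx'.2).le))
    apply le_antisymm
    · calc volume (B ⁻¹' A) ≤ volume ((B ⁻¹' A ∩ Iio 0) ∪ (B ⁻¹' A ∩ Ioi 0) ∪ {0}) :=
            measure_mono hsub
        _ ≤ volume ((B ⁻¹' A ∩ Iio 0) ∪ (B ⁻¹' A ∩ Ioi 0)) + volume {0} :=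
            measure_union_le _ _
        _ = volume ((B ⁻¹' A ∩ Iio 0) ∪ (B ⁻¹' A ∩ Ioi 0)) := by
            simp [Real.volume_singleton]
        _ = volume (B ⁻¹' A ∩ Iio 0) + volume (B ⁻¹' A ∩ Ioi 0) :=
            measure_union hdisj (hpre.inter measurableSet_Ioi)
    · calc volume (B ⁻¹' A ∩ Iio 0) + volume (B ⁻¹' A ∩ Ioi 0)
          = volume ((B ⁻¹' A ∩ Iio 0) ∪ (B ⁻¹' A ∩ Ioi 0)) :=
            (measure_union hdisj (hpre.inter measurableSet_Ioi)).symm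
        _ ≤ volume (B ⁻¹' A) := measure_mono (by
            intro x hx; rcases hx with h | h <;> exact h.1)
  -- change of variables
  have hvp : volume (fp '' A) = ∫⁻ u in A, ENNReal.ofReal |dp u| := by
    rw [← setLIntegral_one, lintegral_image_deriv hA
      (fun x _ => (hasDerivAt_fp x).hasDerivWithinAt) hinjp]
    simp
  have hvm : volume (fm '' A) = ∫⁻ u in A, ENNReal.ofReal |dm u| := by
    rw [← setLIntegral_one, lintegral_image_deriv hA
      (fun x _ => (hasDerivAt_fm x).hasDerivWithinAt) hinjm]
    simp
  rw [hsplit, hvp, hvm]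
  have hmeas_dm : Measurable fun u => ENNReal.ofReal |dm u| := by
    apply ENNReal.measurable_ofReal.comp
    apply measurable_abs.comp
    unfold dm sq4
    fun_prop
  rw [← lintegral_add_left hmeas_dm]
  have : ∀ u : ℝ, ENNReal.ofReal |dm u| + ENNReal.ofReal |dp u| = 1 := by
    intro u
    rw [abs_of_pos (dm_pos u), abs_of_pos (dp_pos u),
      ← ENNReal.ofReal_add (dm_pos u).le (dp_pos u).le]
    rw [show dm u + dp u = 1 by linarith [dp_add_dm u]]
    simp
  simp only [this]
  exact setLIntegral_one A
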